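/- Let β ∈ (-1,0), λ ≥ 0, t > 0 and p ∈ [1, 1/|β|). Then there exists a constant C = C(λ,β,p,t) > 0 such that for all ε ∈ (0, min(1,t)), ∫₀ᵗ |(s+ε)^β e^{-λ(s+ε)} - s^β e^{-λs}|^p ds ≤ C · ε^{1-|β|p}. In particular this integral tends to 0 as ε → 0⁺. -/

import Mathlib

open MeasureTheory Real Filter
open intervalIntegral


lemma aux_rpow_diff {β a b : ℝ} (hβ0 : β < 0) (ha : 0 < a) (hab : a ≤ b) :
    a ^ β - b ^ β ≤ (-β) * ((b - a) * a ^ (β - 1)) := by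
  have h0 : (0:ℝ) ∉ Set.uIcc a b := by
    rw [Set.uIcc_of_le hab]
    intro h; exact absurd h.1 (by linarith)
  have hint : ∫ x in a..b, x ^ (β - 1) = (b ^ β - a ^ β) / β := by
    rw [integral_rpow (Or.inr ⟨by intro h; linarith [sub_eq_iff_eq_add.mp h], h0⟩)]
    rw [show β - 1 + 1 = β by ring]
  have hIf : IntervalIntegrable (fun x => x ^ (β - 1)) volume a b :=
    intervalIntegrable_rpow (Or.inr h0)
  have hIg : IntervalIntegrable (fun _ : ℝ => a ^ (β - 1)) volume a b :=
    intervalIntegrable_const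
  have hle : ∫ x in a..b, x ^ (β - 1) ≤ ∫ _ in a..b, a ^ (β - 1) := by
    apply integral_mono_on hab hIf hIg
    intro x hx
    exact rpow_le_rpow_of_nonpos ha hx.1 (by linarith)
  rw [hint, intervalIntegral.integral_const, smul_eq_mul] at hle
  have hβ' : (0:ℝ) < -β := by linarith
  have := mul_le_mul_of_nonneg_left hle hβ'.le
  calc a ^ β - b ^ β = (-β) * ((b ^ β - a ^ β) / β) := by
        field_simp
        rw [mul_div_cancel_left₀ _ (ne_of_lt hβ0)]
        ring
    _ ≤ (-β) * ((b - a) * a ^ (β - 1)) := this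

lemma aux_two {a b p : ℝ} (ha : 0 ≤ a) (hb : 0 ≤ b) (hp : 0 ≤ p) :
    (a + b) ^ p ≤ 2 ^ p * (a ^ p + b ^ p) := by
  rcases le_total a b with h | h
  · calc (a + b) ^ p ≤ (2 * b) ^ p :=
          rpow_le_rpow (by linarith) (by linarith) hp
      _ = 2 ^ p * b ^ p := mul_rpow (by norm_num) hb
      _ ≤ 2 ^ p * (a ^ p + b ^ p) := by
          have := rpow_nonneg ha p
          have h2 : (0:ℝ) ≤ (2:ℝ) ^ p := rpow_nonneg (by norm_num) p
          nlinarith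
  · calc (a + b) ^ p ≤ (2 * a) ^ p :=
          rpow_le_rpow (by linarith) (by linarith) hp
      _ = 2 ^ p * a ^ p := mul_rpow (by norm_num) ha
      _ ≤ 2 ^ p * (a ^ p + b ^ p) := by
          have := rpow_nonneg hb p
          have h2 : (0:ℝ) ≤ (2:ℝ) ^ p := rpow_nonneg (by norm_num) p
          nlinarith

lemma aux_ptwise {β lam s ε : ℝ} (hβ0 : β < 0) (hlam : 0 ≤ lam) (hs : 0 < s) (hε : 0 < ε) :
    |(s + ε) ^ β * Real.exp (-(lam * (s + ε))) - s ^ β * Real.exp (-(lam * s))|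
      ≤ (s ^ β - (s + ε) ^ β) + lam * ε * s ^ β := by
  have hsε : 0 < s + ε := by linarith
  have h1 : (s + ε) ^ β ≤ s ^ β := rpow_le_rpow_of_nonpos hs (by linarith) hβ0.le
  have hB : 0 ≤ (s + ε) ^ β := rpow_nonneg hsε.le β
  have hA : 0 ≤ s ^ β := rpow_nonneg hs.le β
  have h2 : Real.exp (-(lam * (s + ε))) ≤ Real.exp (-(lam * s)) :=
    Real.exp_le_exp.mpr (by nlinarith)
  have hu1 : Real.exp (-(lam * s)) ≤ 1 := Real.exp_le_one_iff.mpr (by nlinarith)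
  have hxy : (s + ε) ^ β * Real.exp (-(lam * (s + ε))) ≤ s ^ β * Real.exp (-(lam * s)) :=
    mul_le_mul h1 h2 (Real.exp_pos _).le hA
  rw [abs_sub_comm, abs_of_nonneg (by linarith)]
  have hsplit : Real.exp (-(lam * (s + ε))) = Real.exp (-(lam * s)) * Real.exp (-(lam * ε)) := by
    rw [← Real.exp_add]; ring_nf
  have hbern : 1 - Real.exp (-(lam * ε)) ≤ lam * ε := by
    have := Real.add_one_le_exp (-(lam * ε)); linarith
  have hv0 : 0 < Real.exp (-(lam * ε)) := Real.exp_pos _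
  have hu0 : 0 < Real.exp (-(lam * s)) := Real.exp_pos _
  rw [hsplit]
  have hv1 : Real.exp (-(lam * ε)) ≤ 1 := Real.exp_le_one_iff.mpr (by nlinarith)
  have key : s ^ β * Real.exp (-(lam * s)) -
      (s + ε) ^ β * (Real.exp (-(lam * s)) * Real.exp (-(lam * ε)))
      = Real.exp (-(lam * s)) * (s ^ β - (s + ε) ^ β)
        + (Real.exp (-(lam * s)) * (s + ε) ^ β) * (1 - Real.exp (-(lam * ε))) := by ring
  have e1 : Real.exp (-(lam * s)) * (s ^ β - (s + ε) ^ β) ≤ s ^ β - (s + ε) ^ β := by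
    nlinarith [sub_nonneg.mpr h1]
  have e2 : (Real.exp (-(lam * s)) * (s + ε) ^ β) * (1 - Real.exp (-(lam * ε)))
      ≤ (s + ε) ^ β * (lam * ε) := by
    have hub : Real.exp (-(lam * s)) * (s + ε) ^ β ≤ (s + ε) ^ β := by nlinarith
    nlinarith [mul_nonneg hu0.le hB]
  have e3 : (s + ε) ^ β * (lam * ε) ≤ s ^ β * (lam * ε) :=
    mul_le_mul_of_nonneg_right h1 (mul_nonneg hlam hε.le)
  rw [key]
  nlinarith [e1, e2, e3]

lemma aux_crude {β lam s ε : ℝ} (hβ0 : β < 0) (hlam : 0 ≤ lam) (hs : 0 < s) (hε : 0 < ε) :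
    |(s + ε) ^ β * Real.exp (-(lam * (s + ε))) - s ^ β * Real.exp (-(lam * s))| ≤ s ^ β := by
  have hsε : 0 < s + ε := by linarith
  have h1 : (s + ε) ^ β ≤ s ^ β := Real.rpow_le_rpow_of_nonpos hs (by linarith) hβ0.le
  have hB : 0 ≤ (s + ε) ^ β := Real.rpow_nonneg hsε.le β
  have hA : 0 ≤ s ^ β := Real.rpow_nonneg hs.le β
  have e1 : Real.exp (-(lam * (s + ε))) ≤ 1 := Real.exp_le_one_iff.mpr (by nlinarith)
  have e2 : Real.exp (-(lam * s)) ≤ 1 := Real.exp_le_one_iff.mpr (by nlinarith)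
  have e1' : 0 < Real.exp (-(lam * (s + ε))) := Real.exp_pos _
  have e2' : 0 < Real.exp (-(lam * s)) := Real.exp_pos _
  rw [abs_le]
  constructor <;> nlinarith [mul_le_mul_of_nonneg_left e1 hB, mul_le_mul_of_nonneg_left e2 hA,
    mul_nonneg hB e1'.le, mul_nonneg hA e2'.le, mul_le_mul h1 e1 e1'.le hA]

lemma aux_main (β lam p t : ℝ) (hβ : β ∈ Set.Ioo (-1 : ℝ) 0) (hlam : 0 ≤ lam)
    (ht : 0 < t) (hp : 1 ≤ p) (hp' : p < 1 / |β|) :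
    ∃ C > 0, ∀ ε ∈ Set.Ioo 0 (min 1 t),
      (∫ s in (0:ℝ)..t,
        |(s + ε) ^ β * Real.exp (-(lam * (s + ε))) - s ^ β * Real.exp (-(lam * s))| ^ p)
        ≤ C * ε ^ (1 - |β| * p) := by
  obtain ⟨hβ1, hβ0⟩ := hβ
  have hβne : β ≠ 0 := ne_of_lt hβ0
  have habs : |β| = -β := abs_of_neg hβ0
  have hp0 : (0:ℝ) < p := lt_of_lt_of_le one_pos hp
  have hβabs : 0 < |β| := abs_pos.mpr hβne
  have hbp1 : |β| * p < 1 := by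
    have := (lt_div_iff₀ hβabs).mp hp'
    linarith
  have hbp : -1 < β * p := by rw [habs] at hbp1; nlinarith
  have hbp0 : β * p < 0 := mul_neg_of_neg_of_pos hβ0 hp0
  have hexp : 1 - |β| * p = β * p + 1 := by rw [habs]; ring
  have h1bp : 0 < 1 + β * p := by linarith
  set q : ℝ := (β - 1) * p + 1 with hq
  have hqneg : q < 0 := by nlinarith
  have h2p : (0:ℝ) < 2 ^ p := rpow_pos_of_pos two_pos p
  have hnegβp : (0:ℝ) < (-β) ^ p := rpow_pos_of_pos (by linarith) p
  have hlamp : (0:ℝ) ≤ lam ^ p := rpow_nonneg hlam p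
  have htp : (0:ℝ) < t ^ (β * p + 1) := rpow_pos_of_pos ht _
  refine ⟨1 / (1 + β * p) + 2 ^ p * (-β) ^ p / (-q) + 2 ^ p * lam ^ p * t ^ (β * p + 1) / (1 + β * p),
    by
      refine add_pos_of_pos_of_nonneg (add_pos (div_pos one_pos h1bp)
        (div_pos (mul_pos h2p hnegβp) (by linarith : (0:ℝ) < -q))) ?_
      exact div_nonneg (mul_nonneg (mul_nonneg h2p.le hlamp) htp.le) h1bp.le, ?_⟩
  intro ε hε
  obtain ⟨hε0, hεlt⟩ := hε
  have hε1 : ε < 1 := lt_of_lt_of_le hεlt (min_le_left _ _)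
  have hεt : ε < t := lt_of_lt_of_le hεlt (min_le_right _ _)
  set f : ℝ → ℝ := fun s =>
    |(s + ε) ^ β * Real.exp (-(lam * (s + ε))) - s ^ β * Real.exp (-(lam * s))| ^ p with hf
  have hmeas : Measurable f := by fun_prop
  have hcrude : ∀ s ∈ Set.Ioc (0:ℝ) t, f s ≤ s ^ (β * p) := by
    intro s hs
    have h := rpow_le_rpow (abs_nonneg _) (aux_crude hβ0 hlam hs.1 hε0) hp0.le
    rwa [← Real.rpow_mul hs.1.le] at h
  have hint_gt : IntegrableOn (fun s : ℝ => s ^ (β * p)) (Set.Ioc 0 t) :=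
    (intervalIntegrable_iff_integrableOn_Ioc_of_le ht.le).mp (intervalIntegrable_rpow' hbp)
  have hf_int : IntegrableOn f (Set.Ioc 0 t) := by
    apply Integrable.mono' hint_gt (hmeas.aestronglyMeasurable.restrict)
    filter_upwards [ae_restrict_mem measurableSet_Ioc] with s hs
    rw [Real.norm_eq_abs, abs_of_nonneg (rpow_nonneg (abs_nonneg _) p)]
    exact hcrude s hs
  have hfI : IntervalIntegrable f volume 0 t :=
    (intervalIntegrable_iff_integrableOn_Ioc_of_le ht.le).mpr hf_int
  have hmem1 : (0:ℝ) ∈ Set.uIcc (0:ℝ) t := Set.left_mem_uIcc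
  have hmemε : ε ∈ Set.uIcc (0:ℝ) t := by
    rw [Set.uIcc_of_le ht.le]; exact ⟨hε0.le, hεt.le⟩
  have hmemt : t ∈ Set.uIcc (0:ℝ) t := Set.right_mem_uIcc
  have hI1 : IntervalIntegrable f volume 0 ε :=
    hfI.mono_set (Set.uIcc_subset_uIcc hmem1 hmemε)
  have hI2 : IntervalIntegrable f volume ε t :=
    hfI.mono_set (Set.uIcc_subset_uIcc hmemε hmemt)
  have hsplit : ∫ s in (0:ℝ)..t, f s = (∫ s in (0:ℝ)..ε, f s) + ∫ s in ε..t, f s :=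
    (intervalIntegral.integral_add_adjacent_intervals hI1 hI2).symm
  -- piece 1
  have hp1 : ∫ s in (0:ℝ)..ε, f s ≤ ε ^ (β * p + 1) / (β * p + 1) := by
    have hmono : ∫ s in (0:ℝ)..ε, f s ≤ ∫ s in (0:ℝ)..ε, s ^ (β * p) := by
      rw [intervalIntegral.integral_of_le hε0.le, intervalIntegral.integral_of_le hε0.le]
      refine setIntegral_mono_on (hf_int.mono_set (Set.Ioc_subset_Ioc_right hεt.le))
        ((intervalIntegrable_iff_integrableOn_Ioc_of_le hε0.le).mp (intervalIntegrable_rpow' hbp))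
        measurableSet_Ioc ?_
      intro s hs; exact hcrude s ⟨hs.1, hs.2.trans hεt.le⟩
    have hcomp : ∫ s in (0:ℝ)..ε, s ^ (β * p) = ε ^ (β * p + 1) / (β * p + 1) := by
      rw [integral_rpow (Or.inl hbp), Real.zero_rpow (by linarith : β * p + 1 ≠ 0), sub_zero]
    linarith [hmono, hcomp.le, hcomp.ge]
  -- piece 2 pointwise bound
  have hptw2 : ∀ s ∈ Set.Ioc ε t, f s ≤
      2 ^ p * ((-β) ^ p * ε ^ p * s ^ ((β - 1) * p) + lam ^ p * ε ^ p * s ^ (β * p)) := by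
    intro s hs
    have hs0 : 0 < s := lt_trans hε0 hs.1
    have hsub : 0 ≤ s ^ β - (s + ε) ^ β :=
      sub_nonneg.mpr (Real.rpow_le_rpow_of_nonpos hs0 (by linarith) hβ0.le)
    have hmul : 0 ≤ lam * ε * s ^ β :=
      mul_nonneg (mul_nonneg hlam hε0.le) (rpow_nonneg hs0.le β)
    have step1 : f s ≤ ((s ^ β - (s + ε) ^ β) + lam * ε * s ^ β) ^ p :=
      rpow_le_rpow (abs_nonneg _) (aux_ptwise hβ0 hlam hs0 hε0) hp0.le
    have step2 : ((s ^ β - (s + ε) ^ β) + lam * ε * s ^ β) ^ p ≤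
        2 ^ p * ((s ^ β - (s + ε) ^ β) ^ p + (lam * ε * s ^ β) ^ p) :=
      aux_two hsub hmul hp0.le
    have diff_le : s ^ β - (s + ε) ^ β ≤ (-β) * (ε * s ^ (β - 1)) := by
      have h := aux_rpow_diff hβ0 hs0 (by linarith : s ≤ s + ε)
      rwa [add_sub_cancel_left] at h
    have step3 : (s ^ β - (s + ε) ^ β) ^ p ≤ (-β) ^ p * ε ^ p * s ^ ((β - 1) * p) := by
      have h := rpow_le_rpow hsub diff_le hp0.le
      rw [mul_rpow (by linarith : (0:ℝ) ≤ -β) (mul_nonneg hε0.le (rpow_nonneg hs0.le _)),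
        mul_rpow hε0.le (rpow_nonneg hs0.le _), ← Real.rpow_mul hs0.le, ← mul_assoc] at h
      exact h
    have step4 : (lam * ε * s ^ β) ^ p = lam ^ p * ε ^ p * s ^ (β * p) := by
      rw [mul_rpow (mul_nonneg hlam hε0.le) (rpow_nonneg hs0.le _),
        mul_rpow hlam hε0.le, ← Real.rpow_mul hs0.le]
    calc f s ≤ 2 ^ p * ((s ^ β - (s + ε) ^ β) ^ p + (lam * ε * s ^ β) ^ p) :=
          le_trans step1 step2
      _ ≤ 2 ^ p * ((-β) ^ p * ε ^ p * s ^ ((β - 1) * p) + lam ^ p * ε ^ p * s ^ (β * p)) := by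
          rw [step4] at *
          nlinarith [step3]
  -- integrability of bound on [ε, t]
  have h0not : (0:ℝ) ∉ Set.uIcc ε t := by
    rw [Set.uIcc_of_le hεt.le]; intro h; exact absurd h.1 (by linarith)
  have hIq : IntervalIntegrable (fun s : ℝ => s ^ ((β - 1) * p)) volume ε t :=
    intervalIntegrable_rpow (Or.inr h0not)
  have hIb : IntervalIntegrable (fun s : ℝ => s ^ (β * p)) volume ε t :=
    intervalIntegrable_rpow (Or.inr h0not)
  have hG : IntervalIntegrable (fun s : ℝ =>
      2 ^ p * ((-β) ^ p * ε ^ p * s ^ ((β - 1) * p) + lam ^ p * ε ^ p * s ^ (β * p)))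
      volume ε t :=
    ((hIq.const_mul _).add (hIb.const_mul _)).const_mul _
  have hmono2 : ∫ s in ε..t, f s ≤ ∫ s in ε..t,
      2 ^ p * ((-β) ^ p * ε ^ p * s ^ ((β - 1) * p) + lam ^ p * ε ^ p * s ^ (β * p)) := by
    rw [intervalIntegral.integral_of_le hεt.le, intervalIntegral.integral_of_le hεt.le]
    exact setIntegral_mono_on (hf_int.mono_set (Set.Ioc_subset_Ioc_left hε0.le))
      ((intervalIntegrable_iff_integrableOn_Ioc_of_le hεt.le).mp hG) measurableSet_Ioc hptw2
  have hqne : (β - 1) * p ≠ -1 := by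
    intro h
    rw [hq, h] at hqneg
    norm_num at hqneg
  have hIqbound : ∫ s in ε..t, s ^ ((β - 1) * p) ≤ ε ^ q / (-q) := by
    rw [integral_rpow (Or.inr ⟨hqne, h0not⟩), ← hq]
    have ht' : (0:ℝ) < t ^ q := rpow_pos_of_pos ht q
    have hε' : (0:ℝ) < ε ^ q := rpow_pos_of_pos hε0 q
    have heq : (t ^ q - ε ^ q) / q = (ε ^ q - t ^ q) / (-q) := by
      rw [div_neg, ← neg_div, neg_sub]
    rw [heq]
    have hnq : (0:ℝ) < -q := by linarith
    gcongr
    linarith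
  have hIbbound : ∫ s in ε..t, s ^ (β * p) ≤ t ^ (β * p + 1) / (β * p + 1) := by
    rw [integral_rpow (Or.inl hbp)]
    have hε' : (0:ℝ) < ε ^ (β * p + 1) := rpow_pos_of_pos hε0 _
    exact (div_le_div_iff_of_pos_right (by linarith : (0:ℝ) < β * p + 1)).mpr (by linarith)
  -- evaluate the bounding integral
  have hGval : ∫ s in ε..t,
      2 ^ p * ((-β) ^ p * ε ^ p * s ^ ((β - 1) * p) + lam ^ p * ε ^ p * s ^ (β * p))
      = 2 ^ p * ((-β) ^ p * ε ^ p * (∫ s in ε..t, s ^ ((β - 1) * p))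
        + lam ^ p * ε ^ p * (∫ s in ε..t, s ^ (β * p))) := by
    rw [intervalIntegral.integral_const_mul,
      intervalIntegral.integral_add (hIq.const_mul _) (hIb.const_mul _),
      intervalIntegral.integral_const_mul, intervalIntegral.integral_const_mul]
  have hεpq : ε ^ p * (ε ^ q / (-q)) = ε ^ (β * p + 1) / (-q) := by
    rw [← mul_div_assoc, ← Real.rpow_add hε0, hq]
    congr 2
    ring
  have hεple : ε ^ p ≤ ε ^ (β * p + 1) :=
    rpow_le_rpow_of_exponent_ge hε0 hε1.le (by nlinarith)
  -- combine
  set E : ℝ := ε ^ (β * p + 1) with hE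
  have hEpos : 0 < E := rpow_pos_of_pos hε0 _
  have hp2 : ∫ s in ε..t, f s ≤
      2 ^ p * (-β) ^ p / (-q) * E + 2 ^ p * lam ^ p * t ^ (β * p + 1) / (β * p + 1) * E := by
    have hεp : (0:ℝ) < ε ^ p := rpow_pos_of_pos hε0 _
    have b1 : (-β) ^ p * ε ^ p * (∫ s in ε..t, s ^ ((β - 1) * p))
        ≤ (-β) ^ p / (-q) * E := by
      have h := mul_le_mul_of_nonneg_left hIqbound (mul_nonneg hnegβp.le hεp.le)
      calc (-β) ^ p * ε ^ p * (∫ s in ε..t, s ^ ((β - 1) * p))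
          ≤ (-β) ^ p * ε ^ p * (ε ^ q / (-q)) := h
        _ = (-β) ^ p / (-q) * E := by rw [mul_assoc, hεpq, hE]; field_simp
    have b2 : lam ^ p * ε ^ p * (∫ s in ε..t, s ^ (β * p))
        ≤ lam ^ p * t ^ (β * p + 1) / (β * p + 1) * E := by
      have hIbnonneg : 0 ≤ ∫ s in ε..t, s ^ (β * p) := by
        apply intervalIntegral.integral_nonneg hεt.le
        intro x hx
        exact rpow_nonneg (by linarith [hx.1] : (0:ℝ) ≤ x) _
      calc lam ^ p * ε ^ p * (∫ s in ε..t, s ^ (β * p))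
          ≤ lam ^ p * ε ^ p * (t ^ (β * p + 1) / (β * p + 1)) := by
            apply mul_le_mul_of_nonneg_left hIbbound (mul_nonneg hlamp hεp.le)
        _ ≤ lam ^ p * E * (t ^ (β * p + 1) / (β * p + 1)) := by
            have hd : 0 ≤ t ^ (β * p + 1) / (β * p + 1) := div_nonneg htp.le (by linarith)
            have := mul_le_mul_of_nonneg_left hεple hlamp
            exact mul_le_mul_of_nonneg_right this hd
        _ = lam ^ p * t ^ (β * p + 1) / (β * p + 1) * E := by ring
    calc ∫ s in ε..t, f s ≤ _ := hmono2
      _ = 2 ^ p * ((-β) ^ p * ε ^ p * (∫ s in ε..t, s ^ ((β - 1) * p))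
            + lam ^ p * ε ^ p * (∫ s in ε..t, s ^ (β * p))) := hGval
      _ ≤ 2 ^ p * ((-β) ^ p / (-q) * E + lam ^ p * t ^ (β * p + 1) / (β * p + 1) * E) :=
          mul_le_mul_of_nonneg_left (add_le_add b1 b2) h2p.le
      _ = 2 ^ p * (-β) ^ p / (-q) * E + 2 ^ p * lam ^ p * t ^ (β * p + 1) / (β * p + 1) * E := by
          ring
  rw [hexp, hsplit]
  have hp1' : ∫ s in (0:ℝ)..ε, f s ≤ 1 / (β * p + 1) * E := by
    rw [hE]
    calc ∫ s in (0:ℝ)..ε, f s ≤ ε ^ (β * p + 1) / (β * p + 1) := hp1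
      _ = 1 / (β * p + 1) * ε ^ (β * p + 1) := by ring
  calc (∫ s in (0:ℝ)..ε, f s) + ∫ s in ε..t, f s
      ≤ 1 / (β * p + 1) * E + (2 ^ p * (-β) ^ p / (-q) * E
        + 2 ^ p * lam ^ p * t ^ (β * p + 1) / (β * p + 1) * E) := by linarith
    _ = (1 / (1 + β * p) + 2 ^ p * (-β) ^ p / (-q)
        + 2 ^ p * lam ^ p * t ^ (β * p + 1) / (1 + β * p)) * E := by
        rw [show (1:ℝ) + β * p = β * p + 1 by ring]
        ring

/-- For `β ∈ (-1,0)`, `λ ≥ 0`, `t > 0` and `p ∈ [1, 1/|β|)`, there is a constant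
`C = C(λ,β,p,t) > 0` such that for all `ε ∈ (0, min(1,t))`,
`∫₀ᵗ |(s+ε)^β e^{-λ(s+ε)} - s^β e^{-λs}|^p ds ≤ C ε^{1-|β|p}`; in particular the
integral tends to `0` as `ε → 0⁺`. -/
theorem stmt_1 (β lam p t : ℝ) (hβ : β ∈ Set.Ioo (-1 : ℝ) 0) (hlam : 0 ≤ lam)
    (ht : 0 < t) (hp : 1 ≤ p) (hp' : p < 1 / |β|) :
    (∃ C > 0, ∀ ε ∈ Set.Ioo 0 (min 1 t),
      (∫ s in (0:ℝ)..t,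
        |(s + ε) ^ β * Real.exp (-(lam * (s + ε))) - s ^ β * Real.exp (-(lam * s))| ^ p)
        ≤ C * ε ^ (1 - |β| * p)) ∧
    Tendsto (fun ε : ℝ => ∫ s in (0:ℝ)..t,
        |(s + ε) ^ β * Real.exp (-(lam * (s + ε))) - s ^ β * Real.exp (-(lam * s))| ^ p)
      (nhdsWithin 0 (Set.Ioi 0)) (nhds 0) := by
  obtain ⟨C, hC, hbound⟩ := aux_main β lam p t hβ hlam ht hp hp'
  refine ⟨⟨C, hC, hbound⟩, ?_⟩
  have hβabs : 0 < |β| := abs_pos.mpr (ne_of_lt hβ.2)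
  have hexp : 0 < 1 - |β| * p := by
    have := (lt_div_iff₀ hβabs).mp hp'
    linarith
  have hub : Tendsto (fun ε : ℝ => C * ε ^ (1 - |β| * p))
      (nhdsWithin 0 (Set.Ioi 0)) (nhds 0) := by
    have hc : ContinuousAt (fun x : ℝ => x ^ (1 - |β| * p)) 0 :=
      Real.continuousAt_rpow_const 0 _ (Or.inr hexp.le)
    have h0 : (0:ℝ) ^ (1 - |β| * p) = 0 := Real.zero_rpow (ne_of_gt hexp)
    have h2 := (hc.tendsto.mono_left
      (nhdsWithin_le_nhds : nhdsWithin (0:ℝ) (Set.Ioi 0) ≤ nhds 0)).const_mul C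
    rw [h0, mul_zero] at h2
    exact h2
  apply squeeze_zero' ?_ ?_ hub
  · filter_upwards with ε
    exact intervalIntegral.integral_nonneg ht.le fun x _ => rpow_nonneg (abs_nonneg _) p
  · filter_upwards [Ioo_mem_nhdsGT_of_mem
      (⟨le_refl (0:ℝ), lt_min one_pos ht⟩ : (0:ℝ) ∈ Set.Ico 0 (min 1 t))] with ε hε
    exact hbound ε hε
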